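/- Let all parameters be positive constants, ε ∈ [0,1), β > 0, M_T ≥ 0, r ∈ (0,1), and N = rφγ/((γ+μ_{A,1})μ_F). A positive value A is the aquatic component of a nonzero equilibrium of the SIT system (with sterile male level M_T) if and only if P(A) = 0, where P(A) = ((1−r)γ/μ_M)·A² − (M* − βM_T)·A + βM_T·((γ+μ_{A,1})/μ_{A,2})·(1 − εN), with M* = Q(N−1) and Q = (1−r)γ(γ+μ_{A,1})/(μ_{A,2}μ_M). -/

import Mathlib

theorem stmt3 (φ γ μA1 μA2 μM μF r N Q ε β MT A : ℝ)
    (hφ : 0 < φ) (hγ : 0 < γ) (hμA1 : 0 < μA1) (hμA2 : 0 < μA2)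
    (hμM : 0 < μM) (hμF : 0 < μF) (hr0 : 0 < r) (hr1 : r < 1)
    (hε0 : 0 ≤ ε) (hε1 : ε < 1) (hβ : 0 < β) (hMT : 0 ≤ MT)
    (hN : N = r * φ * γ / ((γ + μA1) * μF))
    (hQ : Q = (1 - r) * γ * (γ + μA1) / (μA2 * μM))
    (hA : 0 < A) :
    (let M := (1 - r) * γ * A / μM
     let F := r * γ * A * (M + ε * β * MT) / ((M + β * MT) * μF)
     φ * F - (γ + μA1 + μA2 * A) * A = 0 ∧
     (1 - r) * γ * A - μM * M = 0 ∧
     r * γ * ((M + ε * β * MT) / (M + β * MT)) * A - μF * F = 0) ↔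
    ((1 - r) * γ / μM) * A ^ 2 - (Q * (N - 1) - β * MT) * A
      + β * MT * ((γ + μA1) / μA2) * (1 - ε * N) = 0 := by
  subst hN hQ
  have hr : 0 < 1 - r := by linarith
  have hD : (0:ℝ) < (1 - r) * γ * A / μM + β * MT := by positivity
  have hD' := hD.ne'
  have hγμ : (0:ℝ) < γ + μA1 := by linarith
  have hC : (μA2 * μM * μF * (γ + μA1) ^ 2 : ℝ) ≠ 0 := by positivity
  dsimp only
  constructor
  · rintro ⟨h1, -, -⟩
    field_simp at h1
    have h1' : φ * (r * γ * ((1 - r) * γ * A + ε * β * MT * μM)) -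
        ((1 - r) * γ * A + β * MT * μM) * μF * (γ + μA1 + μA2 * A) = 0 := by
      refine mul_left_cancel₀ hA.ne' ?_
      linear_combination h1
    field_simp
    linear_combination (-1) * h1'
  · intro h
    field_simp at h
    refine ⟨?_, by field_simp; ring, by field_simp; ring⟩
    field_simp
    linear_combination (-A) * h
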